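/- Let I_0 ⊆ I_1 ⊆ ... ⊆ I_q be poset ideals of a finite poset P with each I_j \ I_i (i < j) connected in the Hasse diagram, and let I be a poset ideal with I_0 ⊆ I ⊆ I_q such that for each 1 ≤ k ≤ q, either I_k \ I_{k-1} ⊆ I or (I_k \ I_{k-1}) ∩ I = ∅. Then I = I_k for some 0 ≤ k ≤ q. -/
import Mathlib

open Set

variable {α : Type*} [Fintype α] [PartialOrder α]

/-- A poset ideal (down-set) of a poset. -/
def IsPosetIdeal (I : Set α) : Prop := ∀ ⦃a b : α⦄, a ≤ b → b ∈ I → a ∈ I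

/-- The indicator vector of a subset. -/
noncomputable def rho (I : Set α) : α → ℝ := I.indicator 1

/-- The order polytope of a finite poset. -/
noncomputable def orderPolytope (α : Type*) [Fintype α] [PartialOrder α] : Set (α → ℝ) :=
  convexHull ℝ {x | ∃ I : Set α, IsPosetIdeal I ∧ x = rho I}

/-- A subset of a poset is connected if the induced subgraph of the Hasse diagram is connected. -/
def ConnectedIn (S : Set α) : Prop := ((SimpleGraph.hasse α).induce S).Connected

/-- `conv {v, w}` is an edge (1-dimensional face) of the polytope `P`. -/
def IsEdgeOf (P : Set (α → ℝ)) (v w : α → ℝ) : Prop :=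
  v ≠ w ∧ IsExtreme ℝ P (segment ℝ v w)

private lemma walk_cross {V : Type*} {G : SimpleGraph V} {p : V → Prop} :
    ∀ {u v : V}, G.Walk u v → p u → ¬ p v → ∃ a b, G.Adj a b ∧ p a ∧ ¬ p b := by
  intro u v w
  induction w with
  | nil => intro h h'; exact absurd h h'
  | @cons u c v h w ih =>
    intro hu hv
    by_cases hc : p c
    · exact ih hc hv
    · exact ⟨u, c, h, hu, hc⟩

private lemma connectedIn_cross {S : Set α} (hS : ConnectedIn S) {p : α → Prop}
    {a b : α} (ha : a ∈ S) (hb : b ∈ S) (hpa : p a) (hpb : ¬ p b) :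
    ∃ x ∈ S, ∃ y ∈ S, (SimpleGraph.hasse α).Adj x y ∧ p x ∧ ¬ p y := by
  obtain ⟨w⟩ := hS.preconnected ⟨a, ha⟩ ⟨b, hb⟩
  obtain ⟨x, y, hadj, hx, hy⟩ := walk_cross (p := fun v => p v.1) w hpa hpb
  exact ⟨x.1, x.2, y.1, y.2, hadj, hx, hy⟩

theorem sandwiched_ideal_eq (q : ℕ) (I : Fin (q + 1) → Set α)
    (hI : ∀ k, IsPosetIdeal (I k))
    (hchain : ∀ i j, i ≤ j → I i ⊆ I j)
    (hconn : ∀ i j, i < j → ConnectedIn (I j \ I i))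
    (J : Set α) (hJ : IsPosetIdeal J) (h0 : I 0 ⊆ J) (hq : J ⊆ I (Fin.last q))
    (hblocks : ∀ k : Fin q, I k.succ \ I k.castSucc ⊆ J ∨ (I k.succ \ I k.castSucc) ∩ J = ∅) :
    ∃ k, J = I k := by
  classical
  set f : ℕ → Set α := fun n => I ⟨min n q, Nat.lt_succ_of_le (min_le_right n q)⟩ with hf
  have hfmono : ∀ {i j : ℕ}, i ≤ j → f i ⊆ f j := by
    intro i j hij
    exact hchain _ _ (by simp [Fin.mk_le_mk]; omega)
  have hf0 : f 0 = I 0 := by simp [hf]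
  have hfq : f q = I (Fin.last q) := by simp [hf, Fin.last]
  set P : ℕ → Prop := fun n => f n ⊆ J with hP
  set m : ℕ := Nat.findGreatest P q with hm
  have hmq : m ≤ q := Nat.findGreatest_le q
  have hmJ : f m ⊆ J := by
    have : P m := Nat.findGreatest_spec (P := P) (Nat.zero_le q)
      (by rw [hP]; simp only; rw [hf0]; exact h0)
    exact this
  have hfm : f m = I ⟨m, Nat.lt_succ_of_le hmq⟩ := by simp [hf, min_eq_left hmq]
  refine ⟨⟨m, Nat.lt_succ_of_le hmq⟩, Subset.antisymm ?_ (by rw [← hfm]; exact hmJ)⟩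
  intro x hxJ
  by_contra hxm0
  have hxm : x ∉ f m := by rw [hfm]; exact hxm0
  have hxq : x ∈ f q := by rw [hfq]; exact hq hxJ
  set Q : ℕ → Prop := fun n => ∃ y, y ∈ J ∧ y ∈ f n ∧ y ∉ f m with hQ
  have hQq : Q q := ⟨x, hxJ, hxq, hxm⟩
  set k : ℕ := Nat.find ⟨q, hQq⟩ with hk
  obtain ⟨y, hyJ, hyk, hym⟩ : Q k := Nat.find_spec ⟨q, hQq⟩
  have hkmin : ∀ n < k, ¬ Q n := fun n hn => Nat.find_min ⟨q, hQq⟩ hn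
  have hkq : k ≤ q := Nat.find_min' ⟨q, hQq⟩ hQq
  have hmk : m < k := by
    by_contra h
    push_neg at h
    exact hym (hfmono h hyk)
  have hkpos : 0 < k := lt_of_le_of_lt (Nat.zero_le m) hmk
  have hyk1 : y ∉ f (k - 1) := by
    intro hy
    by_cases h : k - 1 ≤ m
    · exact hym (hfmono h hy)
    · exact hkmin (k - 1) (by omega) ⟨y, hyJ, hy, hym⟩
  have hk1q : k - 1 < q := by omega
  have hfk : f k = I ⟨k, Nat.lt_succ_of_le hkq⟩ := by simp [hf, min_eq_left hkq]
  have hfk1 : f (k - 1) = I ⟨k - 1, by omega⟩ := by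
    simp [hf, min_eq_left (by omega : k - 1 ≤ q)]
  have hSucc : I (⟨k - 1, hk1q⟩ : Fin q).succ = f k := by
    have h1 : (⟨k - 1, hk1q⟩ : Fin q).succ = ⟨k, Nat.lt_succ_of_le hkq⟩ := by
      ext; simp; omega
    rw [h1]; exact hfk.symm
  have hCast : I (⟨k - 1, hk1q⟩ : Fin q).castSucc = f (k - 1) := by
    have h1 : (⟨k - 1, hk1q⟩ : Fin q).castSucc = (⟨k - 1, by omega⟩ : Fin (q + 1)) := rfl
    rw [h1]; exact hfk1.symm
  have hblockk : f k \ f (k - 1) ⊆ J := by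
    rcases hblocks ⟨k - 1, hk1q⟩ with h | h
    · rw [hSucc, hCast] at h; exact h
    · rw [hSucc, hCast] at h
      exfalso
      have : y ∈ (f k \ f (k - 1)) ∩ J := ⟨⟨hyk, hyk1⟩, hyJ⟩
      rw [h] at this; exact this
  have hnotm1 : ¬ P (m + 1) :=
    Nat.findGreatest_is_greatest (P := P) (n := q) (by omega) (by omega)
  have hm1k : m + 1 < k := by
    rcases Nat.lt_or_ge (m + 1) k with h | h
    · exact h
    · exfalso
      have hkm1 : k = m + 1 := by omega
      apply hnotm1
      intro z hz
      by_cases hzm : z ∈ f m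
      · exact hmJ hzm
      · refine hblockk ⟨?_, ?_⟩
        · rw [hkm1]; exact hz
        · rw [show k - 1 = m from by omega]; exact hzm
  obtain ⟨b, hbm1, hbm⟩ : ∃ b, b ∈ f (m + 1) ∧ b ∉ f m := by
    by_contra h
    push_neg at h
    exact hnotm1 (fun z hz => hmJ (h z hz))
  have hbJ : b ∉ J := fun hb => hkmin (m + 1) hm1k ⟨b, hb, hbm1, hbm⟩
  have hconnS : ConnectedIn (f k \ f m) := by
    rw [hfk, hfm]
    exact hconn _ _ (by simp [Fin.mk_lt_mk]; omega)
  have hyS : y ∈ f k \ f m := ⟨hyk, hym⟩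
  have hbS : b ∈ f k \ f m := ⟨hfmono (by omega) hbm1, hbm⟩
  obtain ⟨u, huS, v, hvS, hadj, huJ, hvJ⟩ :=
    connectedIn_cross hconnS (p := fun z => z ∈ J) hyS hbS hyJ hbJ
  have huk1 : u ∉ f (k - 1) := by
    intro hu
    by_cases h : k - 1 ≤ m
    · exact huS.2 (hfmono h hu)
    · exact hkmin (k - 1) (by omega) ⟨u, huJ, hu, huS.2⟩
  have hvk1 : v ∈ f (k - 1) := by
    by_contra hv
    exact hvJ (hblockk ⟨hvS.1, hv⟩)
  rw [SimpleGraph.hasse_adj] at hadj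
  rcases hadj with h | h
  · exact huk1 ((by rw [hfk1]; exact hI _ : IsPosetIdeal (f (k - 1))) h.le hvk1)
  · exact hvJ (hJ h.le huJ)
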